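/- Fix an integer k ≥ 2. Let Z be an element of the subalgebra of U(g ⊗ A_k) generated by g ⊗ A_k⁻ which does not lie in ℂ·1 (i.e. Z is a non-constant element of U(g ⊗ A_k⁻)). Then there exists an integer p₀ > 0 (depending on Z) such that for every integer r ≥ p₀ there exists x ∈ g with [x ⊗ t_{k-1}ʳ, Z] ≠ 0 in U(g ⊗ A_k); that is, the commutator [g ⊗ t_{k-1}ʳ, Z] does not vanish for all r ≥ p₀. -/

import Mathlib

/-!
Statement 2: Fix `k ≥ 2`. Let `g` be a finite-dimensional simple Lie algebra over `ℂ`,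
`A_k = ℂ[t₁^{±1}, …, t_k^{±1}]` (realized as `AddMonoidAlgebra ℂ (Fin k → ℤ)`), and
`g ⊗ A_k` the multi-loop Lie algebra (realized as `A_k ⊗[ℂ] g`).  If `Z` lies in the
subalgebra of `U(g ⊗ A_k)` generated by `g ⊗ A_k⁻` (the span of `x ⊗ t^n` with
`n_k < 0`) and `Z ∉ ℂ·1`, then there is `p₀ > 0` such that for every `r ≥ p₀` there
exists `x ∈ g` with `[x ⊗ t_{k-1}^r, Z] ≠ 0`.  (Variables `t₁, …, t_k` are indexed by
`0, …, k-1 : Fin k`, so `t_{k-1}` has index `k-2` and `t_k` has index `k-1`.)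
-/

open scoped TensorProduct

noncomputable section

/-- The Laurent polynomial ring `ℂ[t₁^{±1}, …, t_k^{±1}]`. -/
abbrev LaurentK (k : ℕ) : Type := AddMonoidAlgebra ℂ (Fin k → ℤ)

/-- The monomial `t₁^{n₁} ⋯ t_k^{n_k}`. -/
abbrev tmon {k : ℕ} (n : Fin k → ℤ) : LaurentK k := AddMonoidAlgebra.single n 1

/-- The multi-loop Lie algebra `g ⊗ A_k`, realized as the base change `A_k ⊗[ℂ] g`. -/
abbrev LoopAlg (k : ℕ) (g : Type*) [LieRing g] [LieAlgebra ℂ g] : Type _ :=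
  LaurentK k ⊗[ℂ] g

/-- `g ⊗ A_k` is a Lie algebra over `ℂ` (restriction of scalars of the
`A_k`-Lie algebra structure from base change). -/
instance (k : ℕ) (g : Type*) [LieRing g] [LieAlgebra ℂ g] :
    LieAlgebra ℂ (LoopAlg k g) :=
  { lie_smul := fun t x y => by
      rw [← algebraMap_smul (LaurentK k) t y,
        lie_smul (R := LaurentK k) (algebraMap ℂ (LaurentK k) t) x y, algebraMap_smul] }

set_option linter.unusedSectionVars false
set_option maxHeartbeats 1000000

namespace CNZ

attribute [local instance] LieRing.ofAssociativeRing

variable (k : ℕ) (g : Type*) [LieRing g] [LieAlgebra ℂ g] [FiniteDimensional ℂ g]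
  [LieAlgebra.IsSimple ℂ g]

abbrev UL : Type _ := UniversalEnvelopingAlgebra ℂ (LoopAlg k g)

variable {k g}

def bA : Module.Basis (Fin k → ℤ) ℂ (LaurentK k) := AddMonoidAlgebra.basis (Fin k → ℤ) ℂ

lemma bA_apply (n : Fin k → ℤ) : (bA : Module.Basis (Fin k → ℤ) ℂ (LaurentK k)) n = tmon n := rfl

def gB : Module.Basis (Fin (Module.finrank ℂ g)) ℂ g := Module.finBasis ℂ g

abbrev Ik (k : ℕ) (g : Type*) [LieRing g] [LieAlgebra ℂ g] [FiniteDimensional ℂ g] :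
    Type _ := (Fin k → ℤ) × Fin (Module.finrank ℂ g)

def bL : Module.Basis (Ik k g) ℂ (LoopAlg k g) := Module.Basis.tensorProduct bA gB

lemma bL_apply (i : Ik k g) : (bL i : LoopAlg k g) = tmon i.1 ⊗ₜ[ℂ] gB i.2 := by
  simp [bL, Module.Basis.tensorProduct_apply', bA_apply]

def eL : LoopAlg k g ≃ₗ[ℂ] ((Fin k → ℤ) →₀ g) :=
  (LinearEquiv.rTensor g (AddMonoidAlgebra.coeffLinearEquiv ℂ)).trans
    (TensorProduct.finsuppScalarLeft ℂ g (Fin k → ℤ))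

lemma eL_tmul (f : LaurentK k) (y : g) (n : Fin k → ℤ) :
    (eL (f ⊗ₜ[ℂ] y) : (Fin k → ℤ) →₀ g) n = f.coeff n • y := by
  show (TensorProduct.finsuppScalarLeft ℂ g (Fin k → ℤ)) (f.coeff ⊗ₜ[ℂ] y) n = f.coeff n • y
  rw [TensorProduct.finsuppScalarLeft_apply_tmul_apply]

def ιU : LoopAlg k g →ₗ⁅ℂ⁆ UL k g := UniversalEnvelopingAlgebra.ι ℂ

def εU : UL k g →ₐ[ℂ] ℂ := UniversalEnvelopingAlgebra.lift ℂ (0 : LoopAlg k g →ₗ⁅ℂ⁆ ℂ)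

@[simp] lemma εU_ι (a : LoopAlg k g) : εU (ιU a) = 0 := by
  calc εU (ιU a) = (0 : LoopAlg k g →ₗ⁅ℂ⁆ ℂ) a :=
        UniversalEnvelopingAlgebra.lift_ι_apply ℂ _ a
    _ = 0 := rfl

/-! ### centres -/

lemma g_nontrivial : Nontrivial g := by
  by_contra h
  rw [not_nontrivial_iff_subsingleton] at h
  exact LieAlgebra.IsSimple.non_abelian (R := ℂ) (L := g)
    ⟨fun x y => Subsingleton.elim _ _⟩

lemma g_center {y : g} (h : ∀ x : g, ⁅x, y⁆ = 0) : y = 0 := by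
  have hy : y ∈ LieAlgebra.center ℂ g := (LieModule.mem_maxTrivSubmodule ℂ g g y).2 h
  rcases LieAlgebra.IsSimple.eq_bot_or_eq_top (R := ℂ) (L := g)
    (LieAlgebra.center ℂ g) with hc | hc
  · rw [hc] at hy; simpa using hy
  · exact absurd ((LieAlgebra.isLieAbelian_iff_center_eq_top ℂ g).2 hc)
      (LieAlgebra.IsSimple.non_abelian (R := ℂ))

lemma finrank_g_pos : 0 < Module.finrank ℂ g := by
  have := g_nontrivial (g := g)
  exact Module.finrank_pos

def d0 : Ik k g := (0, ⟨0, finrank_g_pos⟩)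

lemma ad_one_tmul (x : g) :
    (LieAlgebra.ad ℂ (LoopAlg k g) ((1 : LaurentK k) ⊗ₜ[ℂ] x)).comp
        (LinearMap.id (M := LoopAlg k g)) =
      LinearMap.lTensor (LaurentK k) ((LieAlgebra.ad ℂ g) x) := by
  apply TensorProduct.ext'
  intro f y
  simp only [LinearMap.comp_apply, LinearMap.id_apply, LieAlgebra.ad_apply,
    LinearMap.lTensor_tmul]
  show ⁅(1 : LaurentK k) ⊗ₜ[ℂ] x, f ⊗ₜ[ℂ] y⁆ = f ⊗ₜ[ℂ] ⁅x, y⁆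
  rw [LieAlgebra.ExtendScalars.bracket_tmul, one_mul]

lemma L_center {a : LoopAlg k g} (h : ∀ x : g, ⁅((1 : LaurentK k) ⊗ₜ[ℂ] x : LoopAlg k g), a⁆ = 0) :
    a = 0 := by
  have key : ∀ (x : g) (w : LoopAlg k g) (n : Fin k → ℤ),
      eL (LinearMap.lTensor (LaurentK k) ((LieAlgebra.ad ℂ g) x) w) n
        = (LieAlgebra.ad ℂ g) x (eL w n) := by
    intro x w n
    induction w using TensorProduct.induction_on with
    | zero => simp
    | tmul f y =>
        simp only [LinearMap.lTensor_tmul]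
        rw [eL_tmul, eL_tmul, map_smul]
    | add u v hu hv => simp only [map_add, Finsupp.add_apply, hu, hv]
  have h2 : ∀ n, eL a n = 0 := by
    intro n
    apply g_center
    intro x
    have h0 : (LieAlgebra.ad ℂ (LoopAlg k g)) ((1 : LaurentK k) ⊗ₜ[ℂ] x) a = 0 := by
      rw [LieAlgebra.ad_apply]; exact h x
    have h1 : LinearMap.lTensor (LaurentK k) ((LieAlgebra.ad ℂ g) x) a = 0 := by
      rw [← ad_one_tmul]
      simpa using h0
    have := key x a n
    rw [h1] at this
    simp only [map_zero, Finsupp.coe_zero, Pi.zero_apply] at this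
    have h4 := this.symm
    rw [LieAlgebra.ad_apply] at h4
    exact h4
  have h3 : eL a = 0 := Finsupp.ext h2
  have := congrArg eL.symm h3
  simpa using this

lemma ιU_inj : Function.Injective (ιU : LoopAlg k g → UL k g) := by
  have hcomp : ∀ a : LoopAlg k g,
      (UniversalEnvelopingAlgebra.lift ℂ (LieAlgebra.ad ℂ (LoopAlg k g))) (ιU a)
        = LieAlgebra.ad ℂ (LoopAlg k g) a := fun a =>
    UniversalEnvelopingAlgebra.lift_ι_apply ℂ _ a
  intro a b hab
  have had : LieAlgebra.ad ℂ (LoopAlg k g) a = LieAlgebra.ad ℂ (LoopAlg k g) b := by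
    rw [← hcomp, ← hcomp, hab]
  have hd : LieAlgebra.ad ℂ (LoopAlg k g) (a - b) = 0 := by
    rw [map_sub, had, sub_self]
  have : a - b = 0 := by
    apply L_center
    intro x
    have : ⁅a - b, (1 : LaurentK k) ⊗ₜ[ℂ] x⁆ = 0 := by
      rw [← LieAlgebra.ad_apply (R := ℂ), hd]; rfl
    rw [← lie_skew, this, neg_zero]
  exact sub_eq_zero.mp this



/-! ### coordinate functionals on U -/

def eqW : LoopAlg k g ≃ₗ[ℂ] LinearMap.range (ιU.toLinearMap : LoopAlg k g →ₗ[ℂ] UL k g) :=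
  LinearEquiv.ofInjective (ιU.toLinearMap : LoopAlg k g →ₗ[ℂ] UL k g) ιU_inj

def prW : UL k g →ₗ[ℂ] LinearMap.range (ιU.toLinearMap : LoopAlg k g →ₗ[ℂ] UL k g) :=
  Submodule.projectionOnto _ _
    (Submodule.exists_isCompl
      (LinearMap.range (ιU.toLinearMap : LoopAlg k g →ₗ[ℂ] UL k g))).choose_spec

def cF (i : Ik k g) : UL k g →ₗ[ℂ] ℂ :=
  (bL.coord i) ∘ₗ ((eqW (k := k) (g := g)).symm.toLinearMap ∘ₗ prW)

lemma cF_ι (i : Ik k g) (a : LoopAlg k g) : cF i (ιU a) = bL.repr a i := by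
  have h0 : ((eqW a : _) : UL k g) = ιU a := rfl
  have h1 : prW (ιU a) = eqW a := by
    rw [← h0]
    exact Submodule.projectionOnto_apply_left _ _
  show bL.coord i (eqW.symm (prW (ιU a))) = _
  rw [h1, LinearEquiv.symm_apply_apply, Module.Basis.coord_apply]


lemma cF_u (i i' : Ik k g) : cF i (ιU (bL i')) = if i' = i then 1 else 0 := by
  rw [cF_ι, Module.Basis.repr_self, Finsupp.single_apply]

/-! ### monomials and the length filtration -/

def mu (l : List (LoopAlg k g)) : UL k g := (l.map fun a => ιU a).prod

@[simp] lemma mu_nil : mu ([] : List (LoopAlg k g)) = 1 := rfl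

@[simp] lemma mu_cons (a : LoopAlg k g) (l : List (LoopAlg k g)) :
    mu (a :: l) = ιU a * mu l := by simp [mu]

lemma mu_append (l l' : List (LoopAlg k g)) : mu (l ++ l') = mu l * mu l' := by
  simp [mu]

@[simp] lemma mu_single (a : LoopAlg k g) : mu [a] = ιU a := by simp

def FF (q : ℕ) : Submodule ℂ (UL k g) :=
  Submodule.span ℂ {w | ∃ l : List (LoopAlg k g), l.length ≤ q ∧ w = mu l}

lemma mu_mem_FF {l : List (LoopAlg k g)} {q : ℕ} (h : l.length ≤ q) : mu l ∈ FF q :=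
  Submodule.subset_span ⟨l, h, rfl⟩

lemma FF_mono {q q' : ℕ} (h : q ≤ q') : FF (k := k) (g := g) q ≤ FF q' :=
  Submodule.span_mono (fun w ⟨l, hl, hw⟩ => ⟨l, hl.trans h, hw⟩)

lemma one_mem_FF (q : ℕ) : (1 : UL k g) ∈ FF q := by
  simpa using mu_mem_FF (l := ([] : List (LoopAlg k g))) (q := q) (by simp)

lemma FF_mul_gen {l : List (LoopAlg k g)} {q q' : ℕ} (hl : l.length ≤ q) :
    ∀ y ∈ FF (k := k) (g := g) q', mu l * y ∈ FF (q + q') := by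
  intro y hy
  induction hy using Submodule.span_induction with
  | mem w hw =>
      obtain ⟨l', hl', rfl⟩ := hw
      rw [← mu_append]
      exact mu_mem_FF (by simp [List.length_append]; omega)
  | zero => rw [mul_zero]; exact Submodule.zero_mem _
  | add u v _ _ hu hv => rw [mul_add]; exact Submodule.add_mem _ hu hv
  | smul c u _ hu => rw [mul_smul_comm]; exact Submodule.smul_mem _ _ hu

lemma FF_mul {x y : UL k g} {q q' : ℕ} (hx : x ∈ FF q) (hy : y ∈ FF q') :
    x * y ∈ FF (q + q') := by
  induction hx using Submodule.span_induction with
  | mem w hw =>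
      obtain ⟨l, hl, rfl⟩ := hw
      exact FF_mul_gen hl y hy
  | zero => rw [zero_mul]; exact Submodule.zero_mem _
  | add u v _ _ hu hv => rw [add_mul]; exact Submodule.add_mem _ hu hv
  | smul c u _ hu => rw [smul_mul_assoc]; exact Submodule.smul_mem _ _ hu

/-! ### commutators with monomials -/

lemma comm_mu (a : LoopAlg k g) :
    ∀ l : List (LoopAlg k g),
      ιU a * mu l - mu l * ιU a
        = ∑ i ∈ Finset.range l.length, mu (l.set i ⁅a, l.getD i 0⁆) := by
  intro l
  induction l with
  | nil => simp
  | cons b l ih =>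
      rw [List.length_cons, Finset.sum_range_succ']
      have h0 : (b :: l).set 0 ⁅a, (b :: l).getD 0 0⁆ = ⁅a, b⁆ :: l := rfl
      have hsucc : ∀ i, (b :: l).set (i+1) ⁅a, (b :: l).getD (i+1) 0⁆
          = b :: l.set i ⁅a, l.getD i 0⁆ := fun i => rfl
      simp only [h0, hsucc, mu_cons]
      have hab : ιU ⁅a, b⁆ = ιU a * ιU b - ιU b * ιU a := by
        rw [LieHom.map_lie, LieRing.of_associative_ring_bracket]
      have expand : ιU a * (ιU b * mu l) - ιU b * mu l * ιU a
          = (ιU a * ιU b - ιU b * ιU a) * mu l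
              + ιU b * (ιU a * mu l - mu l * ιU a) := by noncomm_ring
      rw [expand, ih, Finset.mul_sum, ← hab, add_comm]

lemma comm_FF (a : LoopAlg k g) {q : ℕ} {w : UL k g} (hw : w ∈ FF q) :
    ιU a * w - w * ιU a ∈ FF q := by
  induction hw using Submodule.span_induction with
  | mem w hw =>
      obtain ⟨l, hl, rfl⟩ := hw
      rw [comm_mu]
      exact Submodule.sum_mem _ fun i hi =>
        mu_mem_FF (by simpa using hl)
  | zero => simpa using Submodule.zero_mem _
  | add u v _ _ hu hv =>
      have : ιU a * (u + v) - (u + v) * ιU a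
          = (ιU a * u - u * ιU a) + (ιU a * v - v * ιU a) := by noncomm_ring
      rw [this]; exact Submodule.add_mem _ hu hv
  | smul c u _ hu =>
      have : ιU a * (c • u) - (c • u) * ιU a = c • (ιU a * u - u * ιU a) := by
        rw [mul_smul_comm, smul_mul_assoc, smul_sub]
      rw [this]; exact Submodule.smul_mem _ _ hu

/-! ### permutations -/

lemma mu_perm {l l' : List (LoopAlg k g)} (h : l.Perm l') :
    mu l - mu l' ∈ FF (l.length - 1) := by
  induction h with
  | nil => simpa using Submodule.zero_mem _
  | cons a h ih =>
      rename_i l₁ l₂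
      rcases l₁ with _ | ⟨c, l₁⟩
      · have h2 : l₂ = [] := h.symm.eq_nil
        subst h2
        simpa using Submodule.zero_mem (FF (k := k) (g := g) 0)
      · rw [mu_cons a (c :: l₁), mu_cons a l₂, ← mul_sub]
        have h5 := FF_mul (mu_mem_FF (l := [a]) (q := 1) (by simp)) ih
        rw [mu_single] at h5
        have hidx : (a :: c :: l₁).length - 1 = 1 + ((c :: l₁).length - 1) := by
          simp; omega
        rw [hidx]
        exact h5
  | swap x y l =>
      have h1 : mu (y :: x :: l) - mu (x :: y :: l) = ιU ⁅y, x⁆ * mu l := by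
        rw [mu_cons, mu_cons, mu_cons, mu_cons, LieHom.map_lie,
          LieRing.of_associative_ring_bracket]
        noncomm_ring
      rw [h1]
      have := FF_mul (mu_mem_FF (l := [⁅y,x⁆]) (q := 1) (by simp))
        (mu_mem_FF (l := l) (q := l.length) le_rfl)
      rw [mu_single] at this
      have hlen : (y :: x :: l).length - 1 = 1 + l.length := by simp; omega
      rw [hlen]; exact this
  | trans h1 h2 ih1 ih2 =>
      rename_i l₁ l₂ l₃
      have : mu l₁ - mu l₃ = (mu l₁ - mu l₂) + (mu l₂ - mu l₃) := by abel
      rw [this]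
      refine Submodule.add_mem _ ih1 ?_
      rw [show l₁.length = l₂.length from h1.length_eq]
      exact ih2

/-! ### the coproduct -/

def DD0 : LoopAlg k g →ₗ[ℂ] (UL k g ⊗[ℂ] UL k g) :=
  (((TensorProduct.mk ℂ (UL k g) (UL k g)).flip 1).comp ιU.toLinearMap) +
  ((TensorProduct.mk ℂ (UL k g) (UL k g) 1).comp ιU.toLinearMap)

lemma DD0_apply (a : LoopAlg k g) : DD0 a = ιU a ⊗ₜ[ℂ] 1 + 1 ⊗ₜ[ℂ] ιU a := rfl

def DD : LoopAlg k g →ₗ⁅ℂ⁆ (UL k g ⊗[ℂ] UL k g) :=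
  { DD0 with
    map_lie' := by
      intro x y
      show DD0 ⁅x, y⁆ = ⁅DD0 x, DD0 y⁆
      rw [DD0_apply, DD0_apply, DD0_apply]
      rw [LieRing.of_associative_ring_bracket]
      have hx : ιU ⁅x, y⁆ = ιU x * ιU y - ιU y * ιU x := by
        rw [LieHom.map_lie, LieRing.of_associative_ring_bracket]
      rw [hx]
      simp only [mul_add, add_mul, Algebra.TensorProduct.tmul_mul_tmul, one_mul, mul_one,
        TensorProduct.sub_tmul, TensorProduct.tmul_sub]
      abel }

def ΔU : UL k g →ₐ[ℂ] (UL k g ⊗[ℂ] UL k g) := UniversalEnvelopingAlgebra.lift ℂ DD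

@[simp] lemma ΔU_ι (a : LoopAlg k g) : ΔU (ιU a) = ιU a ⊗ₜ[ℂ] 1 + 1 ⊗ₜ[ℂ] ιU a := by
  calc ΔU (ιU a) = DD a := UniversalEnvelopingAlgebra.lift_ι_apply ℂ _ a
    _ = _ := DD0_apply a

def πU : UL k g →ₗ[ℂ] UL k g :=
  LinearMap.id - (Algebra.linearMap ℂ (UL k g)).comp εU.toLinearMap

@[simp] lemma πU_one : πU (1 : UL k g) = 0 := by
  simp [πU, Algebra.linearMap_apply]

@[simp] lemma πU_ι (a : LoopAlg k g) : πU (ιU a) = ιU a := by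
  simp [πU, Algebra.linearMap_apply]

/-! ### splits -/

def splits : List (LoopAlg k g) → List (List (LoopAlg k g) × List (LoopAlg k g))
  | [] => [([], [])]
  | a :: l => ((splits l).map fun s => (a :: s.1, s.2))
      ++ ((splits l).map fun s => (s.1, a :: s.2))

lemma splits_len : ∀ {l : List (LoopAlg k g)} {s}, s ∈ splits l →
    s.1.length + s.2.length = l.length := by
  intro l
  induction l with
  | nil => intro s hs; simp [splits] at hs; simp [hs]
  | cons a l ih =>
      intro s hs
      simp only [splits, List.mem_append, List.mem_map] at hs
      rcases hs with ⟨s', hs', rfl⟩ | ⟨s', hs', rfl⟩ <;>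
        · simp only [List.length_cons]
          have := ih hs'
          omega

lemma list_sum_mul_left {R : Type*} [NonUnitalNonAssocSemiring R] (x : R) (L : List R) :
    x * L.sum = (L.map (fun y => x * y)).sum := by
  induction L with
  | nil => simp
  | cons a L ih => simp [mul_add, ih]

lemma Delta_mu : ∀ l : List (LoopAlg k g),
    ΔU (mu l) = ((splits l).map fun s => mu s.1 ⊗ₜ[ℂ] mu s.2).sum := by
  intro l
  induction l with
  | nil => simp [splits, Algebra.TensorProduct.one_def]
  | cons a l ih =>
      rw [mu_cons, map_mul, ΔU_ι, ih]
      rw [splits, List.map_append, List.sum_append, List.map_map, List.map_map]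
      rw [add_mul, list_sum_mul_left, list_sum_mul_left, List.map_map, List.map_map]
      refine congrArg₂ (· + ·) ?_ ?_
      · refine congrArg List.sum (List.map_congr_left ?_)
        intro s hs
        simp [Algebra.TensorProduct.tmul_mul_tmul]
      · refine congrArg List.sum (List.map_congr_left ?_)
        intro s hs
        simp [Algebra.TensorProduct.tmul_mul_tmul]

/-! ### the functionals Ψ -/

def Psi : List (Ik k g) → UL k g →ₗ[ℂ] ℂ
  | [] => εU.toLinearMap
  | i :: t => (TensorProduct.lift
      (((LinearMap.mul ℂ ℂ).comp ((cF i).comp πU)).compl₂ (Psi t))).comp ΔU.toLinearMap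

lemma Psi_cons_mu (i : Ik k g) (t : List (Ik k g)) (l : List (LoopAlg k g)) :
    Psi (i :: t) (mu l)
      = ((splits l).map fun s => cF i (πU (mu s.1)) * Psi t (mu s.2)).sum := by
  show (TensorProduct.lift _) (ΔU (mu l)) = _
  rw [Delta_mu, map_list_sum, List.map_map]
  exact congrArg List.sum (List.map_congr_left fun s _ => by
    simp [TensorProduct.lift.tmul])

lemma Psi_short : ∀ (il : List (Ik k g)) (l : List (LoopAlg k g)),
    l.length < il.length → Psi il (mu l) = 0 := by
  intro il
  induction il with
  | nil => intro l h; simp at h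
  | cons i t ih =>
      intro l h
      rw [Psi_cons_mu]
      apply List.sum_eq_zero
      intro z hz
      simp only [List.mem_map] at hz
      obtain ⟨s, hs, rfl⟩ := hz
      have hlen := splits_len hs
      rcases Nat.eq_zero_or_pos s.1.length with h1 | h1
      · rw [List.length_eq_zero_iff.mp h1]
        simp
      · have : s.2.length < t.length := by
          simp only [List.length_cons] at h; omega
        rw [ih s.2 this, mul_zero]

lemma Psi_FF (il : List (Ik k g)) {q : ℕ} (hq : q < il.length) {Z : UL k g}
    (hZ : Z ∈ FF q) : Psi il Z = 0 := by
  induction hZ using Submodule.span_induction with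
  | mem w hw =>
      obtain ⟨l, hl, rfl⟩ := hw
      exact Psi_short il l (by omega)
  | zero => simp
  | add u v _ _ hu hv => rw [map_add, hu, hv, add_zero]
  | smul c u _ hu => rw [map_smul, hu, smul_zero]

lemma Psi_perm (il : List (Ik k g)) {l l' : List (LoopAlg k g)} (h : l.Perm l')
    (hlen : l.length = il.length) : Psi il (mu l) = Psi il (mu l') := by
  rcases Nat.eq_zero_or_pos il.length with h0 | h0
  · have hl0 : l = [] := List.length_eq_zero_iff.mp (hlen.trans h0)
    subst hl0
    have hl0' : l' = [] := h.symm.eq_nil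
    subst hl0'
    rfl
  · have hd := mu_perm h
    have : Psi il (mu l - mu l') = 0 := Psi_FF il (by omega) hd
    rw [map_sub, sub_eq_zero] at this
    exact this

/-! ### splits classification -/

instance : Inhabited (LoopAlg k g) := ⟨0⟩

lemma sum_splits_nil {M : Type*} [AddCommMonoid M] :
    ∀ (l : List (LoopAlg k g)) (h : List (LoopAlg k g) → M),
      ((splits l).map fun s => if s.1.length = 0 then h s.2 else 0).sum = h l := by
  intro l
  induction l with
  | nil => intro h; simp [splits]
  | cons a l ih =>
      intro h
      rw [splits, List.map_append, List.sum_append, List.map_map, List.map_map]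
      have h1 : ((splits l).map ((fun s => if s.1.length = 0 then h s.2 else 0) ∘
          (fun s : List (LoopAlg k g) × List (LoopAlg k g) => (a :: s.1, s.2)))).sum = 0 := by
        apply List.sum_eq_zero; intro z hz
        simp only [List.mem_map] at hz
        obtain ⟨s, _, rfl⟩ := hz
        simp
      rw [h1, zero_add]
      exact ih (fun y => h (a :: y))

lemma sum_splits_single {M : Type*} [AddCommMonoid M] :
    ∀ (l : List (LoopAlg k g)) (h : LoopAlg k g → List (LoopAlg k g) → M),
      ((splits l).map fun s => if s.1.length = 1 then h s.1.headI s.2 else 0).sum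
        = ∑ i ∈ Finset.range l.length, h (l.getD i 0) (l.eraseIdx i) := by
  intro l
  induction l with
  | nil => intro h; simp [splits]
  | cons a l ih =>
      intro h
      rw [splits, List.map_append, List.sum_append, List.map_map, List.map_map]
      have h1 : ((splits l).map ((fun s => if s.1.length = 1 then h s.1.headI s.2 else 0) ∘
          (fun s : List (LoopAlg k g) × List (LoopAlg k g) => (a :: s.1, s.2)))).sum
          = h a l := by
        have e : ∀ s ∈ splits l,
            ((fun s => if s.1.length = 1 then h s.1.headI s.2 else 0) ∘
              (fun s : List (LoopAlg k g) × List (LoopAlg k g) => (a :: s.1, s.2))) s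
            = (fun s : List (LoopAlg k g) × List (LoopAlg k g) =>
                if s.1.length = 0 then (fun y => h a y) s.2 else 0) s := by
          intro s _
          simp only [Function.comp_apply, List.length_cons]
          by_cases hnil : s.1.length = 0
          · rw [if_pos (by omega), if_pos hnil]
            have : s.1 = [] := List.length_eq_zero_iff.mp hnil
            rw [this]
            rfl
          · rw [if_neg (by omega), if_neg hnil]
        rw [List.map_congr_left e]
        exact sum_splits_nil l (fun y => h a y)
      rw [h1]
      have h2 : ((splits l).map ((fun s => if s.1.length = 1 then h s.1.headI s.2 else 0) ∘
          (fun s : List (LoopAlg k g) × List (LoopAlg k g) => (s.1, a :: s.2)))).sum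
          = ∑ i ∈ Finset.range l.length, h (l.getD i 0) (a :: l.eraseIdx i) :=
        ih (fun b y => h b (a :: y))
      rw [h2, List.length_cons, Finset.sum_range_succ']
      simp only [List.getD_cons_succ, List.eraseIdx_cons_succ, List.getD_cons_zero,
        List.eraseIdx_cons_zero]
      rw [add_comm]

/-! ### the counting function -/

def Nm : List (Ik k g) → List (Ik k g) → ℕ
  | [], ll => if ll.length = 0 then 1 else 0
  | i :: t, ll =>
      ∑ m ∈ Finset.range ll.length, if ll.getD m d0 = i then Nm t (ll.eraseIdx m) else 0

lemma perm_getD_cons_eraseIdx : ∀ (ll : List (Ik k g)) (m : ℕ), m < ll.length →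
    ll.Perm (ll.getD m d0 :: ll.eraseIdx m) := by
  intro ll
  induction ll with
  | nil => intro m hm; simp at hm
  | cons a l ih =>
      intro m hm
      cases m with
      | zero => simp
      | succ m =>
          have hml : m < l.length := by simpa using hm
          have h1 := (ih m hml).cons a
          have h2 := List.Perm.swap (l.getD m d0) a (l.eraseIdx m)
          simpa using h1.trans h2

lemma Nm_eq_zero : ∀ {il ll : List (Ik k g)}, ¬ il.Perm ll → Nm il ll = 0 := by
  intro il
  induction il with
  | nil =>
      intro ll h
      rw [Nm, if_neg]
      intro h2
      have : ll = [] := List.length_eq_zero_iff.mp h2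
      subst this
      exact h (List.Perm.refl [])
  | cons i t ih =>
      intro ll h
      rw [Nm]
      apply Finset.sum_eq_zero
      intro m hm
      have hml : m < ll.length := Finset.mem_range.mp hm
      by_cases hg : ll.getD m d0 = i
      · rw [if_pos hg]
        by_contra hne
        have hperm : t.Perm (ll.eraseIdx m) := by
          by_contra hp; exact hne (ih hp)
        have B := perm_getD_cons_eraseIdx ll m hml
        rw [hg] at B
        exact h ((hperm.cons i).trans B.symm)
      · rw [if_neg hg]

lemma Nm_pos : ∀ {il ll : List (Ik k g)}, il.Perm ll → 0 < Nm il ll := by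
  intro il
  induction il with
  | nil =>
      intro ll h
      have : ll = [] := h.symm.eq_nil
      subst this
      simp [Nm]
  | cons i t ih =>
      intro ll h
      have hi : i ∈ ll := h.subset (List.mem_cons_self (a := i) (l := t))
      obtain ⟨m, hml, hget⟩ := List.getElem_of_mem hi
      have hgetD : ll.getD m d0 = i := by rw [List.getD_eq_getElem _ _ hml, hget]
      have h2 := perm_getD_cons_eraseIdx ll m hml
      rw [hgetD] at h2
      have hperm : t.Perm (ll.eraseIdx m) := (h.trans h2).cons_inv
      rw [Nm]
      have hterm : 0 < (if ll.getD m d0 = i then Nm t (ll.eraseIdx m) else 0) := by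
        rw [if_pos hgetD]; exact ih hperm
      calc 0 < _ := hterm
        _ ≤ _ := Finset.single_le_sum (f := fun m =>
            if ll.getD m d0 = i then Nm t (ll.eraseIdx m) else 0)
            (fun _ _ => Nat.zero_le _) (Finset.mem_range.mpr hml)

/-! ### evaluation of Ψ on basis monomials -/

def mbL (ll : List (Ik k g)) : List (LoopAlg k g) := ll.map fun j => (bL j : LoopAlg k g)

@[simp] lemma mbL_length (ll : List (Ik k g)) : (mbL (k := k) (g := g) ll).length = ll.length :=
  List.length_map _

lemma mbL_eraseIdx (ll : List (Ik k g)) (m : ℕ) :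
    (mbL ll).eraseIdx m = mbL (ll.eraseIdx m) := by
  induction ll generalizing m with
  | nil => simp [mbL]
  | cons a l ih =>
      cases m with
      | zero => simp [mbL]
      | succ m =>
          simp only [mbL, List.map_cons, List.eraseIdx_cons_succ]
          rw [← mbL, ← mbL, ih]

lemma mbL_getD (ll : List (Ik k g)) (m : ℕ) (hm : m < ll.length) :
    (mbL ll).getD m 0 = bL (ll.getD m d0) := by
  rw [List.getD_eq_getElem _ _ (by simpa using hm), List.getD_eq_getElem _ _ hm]
  simp [mbL]

lemma Psi_mu_basis : ∀ (il ll : List (Ik k g)), il.length = ll.length →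
    Psi il (mu (mbL ll)) = (Nm il ll : ℂ) := by
  intro il
  induction il with
  | nil =>
      intro ll h
      have : ll = [] := List.length_eq_zero_iff.mp h.symm
      subst this
      show εU 1 = _
      simp [Nm, mbL]
  | cons i t ih =>
      intro ll hlen
      simp only [List.length_cons] at hlen
      have step : ∀ s ∈ splits (mbL ll),
          cF i (πU (mu s.1)) * Psi t (mu s.2)
            = if s.1.length = 1 then cF i (ιU s.1.headI) * Psi t (mu s.2) else 0 := by
        intro s hs
        have hlen2 := splits_len hs
        rw [mbL_length] at hlen2
        rcases Nat.lt_or_ge s.1.length 1 with h1 | h1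
        · have h0 : s.1 = [] := List.length_eq_zero_iff.mp (by omega)
          rw [h0, if_neg (by simp)]
          simp
        · rcases Nat.eq_or_lt_of_le h1 with h1 | h1
          · obtain ⟨b, hb⟩ := List.length_eq_one_iff.mp h1.symm
            rw [hb]
            simp
          · rw [Psi_short t s.2 (by omega), mul_zero, if_neg (by omega)]
      have hmap : (List.map (fun s => cF i (πU (mu s.1)) * Psi t (mu s.2))
            (splits (mbL ll))).sum
          = ((splits (mbL ll)).map fun s =>
              if s.1.length = 1 then
                (fun b y => cF i (ιU b) * Psi t (mu y)) s.1.headI s.2 else 0).sum :=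
        congrArg List.sum (List.map_congr_left fun s hs => step s hs)
      rw [Psi_cons_mu, hmap,
        sum_splits_single (mbL ll) (fun b y => cF i (ιU b) * Psi t (mu y)), mbL_length]
      have term : ∀ m ∈ Finset.range ll.length,
          (fun b y => cF i (ιU b) * Psi t (mu y)) ((mbL ll).getD m 0) ((mbL ll).eraseIdx m)
            = ((if ll.getD m d0 = i then Nm t (ll.eraseIdx m) else 0 : ℕ) : ℂ) := by
        intro m hm
        have hml : m < ll.length := Finset.mem_range.mp hm
        simp only []
        rw [mbL_getD ll m hml, mbL_eraseIdx, cF_u]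
        have hel : (ll.eraseIdx m).length = t.length := by
          have := List.length_eraseIdx_add_one (l := ll) (i := m) hml
          omega
        rw [ih (ll.eraseIdx m) hel.symm]
        by_cases hc : ll.getD m d0 = i
        · rw [if_pos hc, if_pos hc, one_mul]
        · rw [if_neg hc, if_neg hc, zero_mul, Nat.cast_zero]
      rw [Finset.sum_congr rfl term,
        show Nm (i :: t) ll = ∑ m ∈ Finset.range ll.length,
          if ll.getD m d0 = i then Nm t (ll.eraseIdx m) else 0 from rfl,
        Nat.cast_sum]

/-! ### multilinearity of mu -/

lemma mu_set_decomp (ll : List (LoopAlg k g)) (i : ℕ) (hi : i < ll.length)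
    (v : LoopAlg k g) :
    mu (ll.set i v) = mu (ll.take i) * ιU v * mu (ll.drop (i+1)) := by
  rw [List.set_eq_take_cons_drop v hi, mu_append, mu_cons, mul_assoc]

lemma mu_set_sum {β : Type*} (s : Finset β) (c : β → ℂ) (v : β → LoopAlg k g)
    (ll : List (LoopAlg k g)) (i : ℕ) (hi : i < ll.length) :
    mu (ll.set i (∑ b ∈ s, c b • v b)) = ∑ b ∈ s, c b • mu (ll.set i (v b)) := by
  rw [mu_set_decomp _ _ hi]
  have hι : ιU (∑ b ∈ s, c b • v b) = ∑ b ∈ s, c b • ιU (v b) := by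
    rw [show (ιU : LoopAlg k g → UL k g) (∑ b ∈ s, c b • v b)
        = ιU.toLinearMap (∑ b ∈ s, c b • v b) from rfl, map_sum]
    refine Finset.sum_congr rfl fun b _ => ?_
    rw [map_smul]; rfl
  rw [hι, Finset.mul_sum, Finset.sum_mul]
  refine Finset.sum_congr rfl fun b _ => ?_
  rw [mul_smul_comm, smul_mul_assoc, mu_set_decomp _ _ hi]

/-! ### bracket with a basis vector -/

lemma bracket_tmon_bL (er : Fin k → ℤ) (x : g) (nj : Ik k g) :
    ⁅(tmon er ⊗ₜ[ℂ] x : LoopAlg k g), (bL nj : LoopAlg k g)⁆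
      = ∑ j' : Fin (Module.finrank ℂ g),
          gB.repr ⁅x, gB nj.2⁆ j' • (bL ((er + nj.1 : Fin k → ℤ), j') : LoopAlg k g) := by
  rw [bL_apply]
  rw [show ⁅(tmon er ⊗ₜ[ℂ] x : LoopAlg k g), tmon nj.1 ⊗ₜ[ℂ] gB nj.2⁆
      = (tmon er * tmon nj.1) ⊗ₜ[ℂ] ⁅x, gB nj.2⁆ from rfl]
  rw [show tmon er * tmon nj.1 = tmon (er + nj.1) by
    rw [AddMonoidAlgebra.single_mul_single, one_mul]]
  conv_lhs => rw [← gB.sum_repr ⁅x, gB nj.2⁆]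
  rw [TensorProduct.tmul_sum]
  refine Finset.sum_congr rfl fun j' _ => ?_
  rw [TensorProduct.tmul_smul, bL_apply]

/-! ### list helpers -/

lemma getD_mem' {α : Type*} (l : List α) (n : ℕ) (d : α) (h : n < l.length) :
    l.getD n d ∈ l := by
  rw [List.getD_eq_getElem _ _ h]; exact List.getElem_mem h

lemma set_perm_cons_eraseIdx {α : Type*} :
    ∀ (l : List α) (i : ℕ), i < l.length → ∀ v : α,
      (l.set i v).Perm (v :: l.eraseIdx i) := by
  intro l
  induction l with
  | nil => intro i hi; simp at hi
  | cons a l ih =>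
      intro i hi v
      cases i with
      | zero => simp
      | succ i =>
          have h1 := ((ih i (by simpa using hi) v).cons a)
          exact h1.trans (List.Perm.swap v a _)

lemma coe_set_eq {α : Type*} (l : List α) (i : ℕ) (hi : i < l.length) (v : α) :
    ((l.set i v : List α) : Multiset α) = v ::ₘ (l.eraseIdx i : List α) := by
  have := set_perm_cons_eraseIdx l i hi v
  rw [Multiset.coe_eq_coe.mpr this]
  rfl

lemma coe_getD_cons_eraseIdx (l : List (Ik k g)) (i : ℕ) (hi : i < l.length) :
    (l : Multiset (Ik k g)) = l.getD i d0 ::ₘ (l.eraseIdx i : List (Ik k g)) := by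
  have := perm_getD_cons_eraseIdx l i hi
  rw [Multiset.coe_eq_coe.mpr this]
  rfl

lemma nat_le_sum_of_mem : ∀ {L : List ℕ} {x : ℕ}, x ∈ L → x ≤ L.sum := by
  intro L
  induction L with
  | nil => intro x hx; simp at hx
  | cons a L ih =>
      intro x hx
      rcases List.mem_cons.mp hx with rfl | hx
      · simp [List.sum_cons, Nat.le_add_right]
      · have := ih hx
        simp only [List.sum_cons]
        omega

lemma list_sum_sub {α M : Type*} [AddCommGroup M] (T : List α) (F G : α → M) :
    (T.map F).sum - (T.map G).sum = (T.map fun t => F t - G t).sum := by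
  induction T with
  | nil => simp
  | cons a T ih => simp only [List.map_cons, List.sum_cons]; rw [← ih]; abel

lemma list_sum_add' {α M : Type*} [AddCommMonoid M] (T : List α) (F G : α → M) :
    (T.map fun t => F t + G t).sum = (T.map F).sum + (T.map G).sum := by
  induction T with
  | nil => simp
  | cons a T ih => simp only [List.map_cons, List.sum_cons]; rw [ih]; abel

lemma finset_sum_toList {α M : Type*} [AddCommMonoid M] (s : Finset α) (f : α → M) :
    (s.toList.map f).sum = ∑ i ∈ s, f i := by
  rw [← Multiset.sum_coe, ← Multiset.map_coe]
  rw [show ((s.toList : List α) : Multiset α) = s.val from by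
    rw [show s.toList = s.val.toList from rfl, Multiset.coe_toList]]
  rfl

lemma list_sum_bind_map {α β M : Type*} [AddCommMonoid M] (S : List α) (f : α → List β)
    (F : β → M) :
    ((S.flatMap f).map F).sum = (S.map fun j => ((f j).map F).sum).sum := by
  induction S with
  | nil => simp
  | cons a S ih =>
      rw [List.flatMap_cons, List.map_append, List.sum_append, ih, List.map_cons, List.sum_cons]

/-! ### canonical representatives -/

def canon (l : List (Ik k g)) : List (Ik k g) := (l : Multiset (Ik k g)).toList

lemma canon_perm (l : List (Ik k g)) : (canon l).Perm l := by
  rw [← Multiset.coe_eq_coe, show ((canon l : List (Ik k g)) : Multiset (Ik k g))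
    = (l : Multiset (Ik k g)) from Multiset.coe_toList _]

lemma canon_eq_of_perm {l l' : List (Ik k g)} (h : l.Perm l') : canon l = canon l' := by
  unfold canon
  rw [Multiset.coe_eq_coe.mpr h]

lemma canon_canon (l : List (Ik k g)) : canon (canon l) = canon l :=
  canon_eq_of_perm (canon_perm l)

lemma canon_length (l : List (Ik k g)) : (canon l).length = l.length :=
  (canon_perm l).length_eq

/-! ### expansion of monomials in the basis -/

lemma mu_expand : ∀ l : List (LoopAlg k g), ∃ T : List (ℂ × List (Ik k g)),
    (∀ t ∈ T, t.2.length = l.length) ∧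
      mu l = (T.map fun t => t.1 • mu (mbL t.2)).sum := by
  intro l
  induction l with
  | nil => exact ⟨[(1, [])], by simp, by simp [mbL]⟩
  | cons a l ih =>
      obtain ⟨T, hT1, hT2⟩ := ih
      set S := (bL.repr a).support.toList with hS
      refine ⟨S.flatMap fun j => T.map fun t => (bL.repr a j * t.1, j :: t.2), ?_, ?_⟩
      · intro t ht
        simp only [List.mem_flatMap, List.mem_map] at ht
        obtain ⟨j, hj, t', ht', rfl⟩ := ht
        simp [hT1 t' ht']
      · have ha : a = (S.map fun j => bL.repr a j • (bL j : LoopAlg k g)).sum := by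
          rw [hS, finset_sum_toList]
          conv_lhs => rw [← bL.linearCombination_repr a]
          rw [Finsupp.linearCombination_apply]
          rfl
        have ha' : ιU a = (S.map fun j => bL.repr a j • ιU (bL j)).sum := by
          conv_lhs => rw [ha]
          rw [show (ιU : LoopAlg k g → UL k g) (S.map fun j =>
              bL.repr a j • (bL j : LoopAlg k g)).sum
            = ιU.toLinearMap (S.map fun j => bL.repr a j • (bL j : LoopAlg k g)).sum from rfl]
          rw [map_list_sum, List.map_map]
          refine congrArg List.sum (List.map_congr_left fun j _ => ?_)
          simp only [Function.comp_apply, map_smul]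
          rfl
        rw [mu_cons, hT2, ha', list_sum_bind_map]
        rw [show ((S.map fun j => bL.repr a j • ιU (bL j)).sum
              * (T.map fun t => t.1 • mu (mbL t.2)).sum)
            = (S.map fun j => (bL.repr a j • ιU (bL j))
                * (T.map fun t => t.1 • mu (mbL t.2)).sum).sum from by
          induction S with
          | nil => simp
          | cons s0 S ihS => simp only [List.map_cons, List.sum_cons, add_mul, ihS]]
        refine congrArg List.sum (List.map_congr_left fun j _ => ?_)
        rw [List.map_map, smul_mul_assoc, list_sum_mul_left, List.map_map, List.smul_sum,
          List.map_map]
        refine congrArg List.sum (List.map_congr_left fun t _ => ?_)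
        simp only [Function.comp_apply, mul_smul_comm, smul_smul,
          show mbL (j :: t.2) = (bL j : LoopAlg k g) :: mbL t.2 from rfl, mu_cons]

/-! ### canonical representation of elements of FF p -/

lemma repr_canonical {Z : UL k g} {p : ℕ} (hZ : Z ∈ FF p) :
    ∃ TS : List (ℂ × List (Ik k g)),
      (∀ t ∈ TS, t.2.length ≤ p ∧ canon t.2 = t.2) ∧
      Z - (TS.map fun t => t.1 • mu (mbL t.2)).sum ∈ FF (p - 1) := by
  induction hZ using Submodule.span_induction with
  | mem w hw =>
      obtain ⟨l, hl, rfl⟩ := hw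
      obtain ⟨T, hT1, hT2⟩ := mu_expand l
      refine ⟨T.map fun t => (t.1, canon t.2), ?_, ?_⟩
      · intro t ht
        obtain ⟨t', ht', rfl⟩ := List.mem_map.mp ht
        exact ⟨by rw [canon_length, hT1 t' ht']; exact hl, canon_canon _⟩
      · rw [hT2, List.map_map, list_sum_sub]
        apply list_sum_mem
        intro x hx
        simp only [List.mem_map] at hx
        obtain ⟨t, ht, rfl⟩ := hx
        simp only [Function.comp_apply]
        rw [← smul_sub]
        apply Submodule.smul_mem
        have hperm : (mbL t.2).Perm (mbL (canon t.2)) :=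
          ((canon_perm t.2).symm).map _
        have := mu_perm hperm
        rw [mbL_length, hT1 t ht] at this
        exact FF_mono (by omega) this
  | zero => exact ⟨[], by simp, by simpa using Submodule.zero_mem _⟩
  | add u v _ _ ihu ihv =>
      obtain ⟨TSu, hu1, hu2⟩ := ihu
      obtain ⟨TSv, hv1, hv2⟩ := ihv
      refine ⟨TSu ++ TSv, ?_, ?_⟩
      · intro t ht
        rcases List.mem_append.mp ht with h | h
        exacts [hu1 t h, hv1 t h]
      · rw [List.map_append, List.sum_append]
        have : u + v - ((TSu.map fun t => t.1 • mu (mbL t.2)).sum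
            + (TSv.map fun t => t.1 • mu (mbL t.2)).sum)
            = (u - (TSu.map fun t => t.1 • mu (mbL t.2)).sum)
              + (v - (TSv.map fun t => t.1 • mu (mbL t.2)).sum) := by abel
        rw [this]
        exact Submodule.add_mem _ hu2 hv2
  | smul c u _ ihu =>
      obtain ⟨TSu, hu1, hu2⟩ := ihu
      refine ⟨TSu.map fun t => (c * t.1, t.2), ?_, ?_⟩
      · intro t ht
        obtain ⟨t', ht', rfl⟩ := List.mem_map.mp ht
        exact hu1 t' ht'
      · rw [List.map_map]
        have he : (TSu.map ((fun t : ℂ × List (Ik k g) => t.1 • mu (mbL t.2))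
              ∘ (fun t : ℂ × List (Ik k g) => (c * t.1, t.2))))
            = TSu.map fun t => c • (t.1 • mu (mbL t.2)) :=
          List.map_congr_left fun t _ => by
            simp only [Function.comp_apply, smul_smul]
        have : c • u - (TSu.map fun t => c • (t.1 • mu (mbL t.2))).sum
            = c • (u - (TSu.map fun t => t.1 • mu (mbL t.2)).sum) := by
          rw [smul_sub, List.smul_sum, List.map_map]
          rfl
        rw [he, this]
        exact Submodule.smul_mem _ _ hu2

/-! ### constant part -/

lemma FF_zero {Z : UL k g} (h : Z ∈ FF 0) : ∃ c : ℂ, Z = algebraMap ℂ (UL k g) c := by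
  have hset : {w : UL k g | ∃ l : List (LoopAlg k g), l.length ≤ 0 ∧ w = mu l}
      = {(1 : UL k g)} := by
    ext w
    constructor
    · rintro ⟨l, hl, rfl⟩
      have : l = [] := List.length_eq_zero_iff.mp (by omega)
      subst this
      simp
    · rintro h
      rcases h with rfl
      exact ⟨[], by simp⟩
  rw [FF, hset] at h
  obtain ⟨c, hc⟩ := Submodule.mem_span_singleton.mp h
  exact ⟨c, by rw [← hc, Algebra.algebraMap_eq_smul_one]⟩

lemma exists_FF {Z : UL k g} (S0 : Set (LoopAlg k g))
    (hZ : Z ∈ Algebra.adjoin ℂ ((fun z => (UniversalEnvelopingAlgebra.ι ℂ) z) '' S0)) :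
    ∃ q, Z ∈ FF q := by
  induction hZ using Algebra.adjoin_induction with
  | mem w hw =>
      obtain ⟨z, _, rfl⟩ := hw
      exact ⟨1, by have h1 := mu_mem_FF (k := k) (g := g) (l := [z]) (q := 1) (by simp); rw [mu_single] at h1; exact h1⟩
  | algebraMap r =>
      exact ⟨0, by
        rw [Algebra.algebraMap_eq_smul_one]
        exact Submodule.smul_mem _ _ (one_mem_FF 0)⟩
  | add u v _ _ ihu ihv =>
      obtain ⟨q1, h1⟩ := ihu
      obtain ⟨q2, h2⟩ := ihv
      exact ⟨max q1 q2, Submodule.add_mem _ (FF_mono (le_max_left _ _) h1)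
        (FF_mono (le_max_right _ _) h2)⟩
  | mul u v _ _ ihu ihv =>
      obtain ⟨q1, h1⟩ := ihu
      obtain ⟨q2, h2⟩ := ihv
      exact ⟨q1 + q2, FF_mul h1 h2⟩

lemma comm_list_sum (a : LoopAlg k g) (T : List (ℂ × List (Ik k g))) :
    ιU a * (T.map fun t => t.1 • mu (mbL t.2)).sum
      - (T.map fun t => t.1 • mu (mbL t.2)).sum * ιU a
      = (T.map fun t => t.1 • (ιU a * mu (mbL t.2) - mu (mbL t.2) * ιU a)).sum := by
  induction T with
  | nil => simp
  | cons t T ih =>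
      simp only [List.map_cons, List.sum_cons]
      rw [← ih]
      rw [mul_add, add_mul, mul_smul_comm, smul_mul_assoc, smul_sub]
      abel

lemma nu_ne_zero (TL : List (Ik k g)) : ((Nm TL TL : ℕ) : ℂ) ≠ 0 := by
  have := Nm_pos (List.Perm.refl TL)
  exact_mod_cast this.ne'

end CNZ

theorem commutator_nonzero_of_nonconstant
    (k : ℕ) (hk : 2 ≤ k)
    (g : Type*) [LieRing g] [LieAlgebra ℂ g] [FiniteDimensional ℂ g]
    [LieAlgebra.IsSimple ℂ g]
    (Z : UniversalEnvelopingAlgebra ℂ (LoopAlg k g))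
    -- `Z` lies in the subalgebra of `U(g ⊗ A_k)` generated by `g ⊗ A_k⁻`:
    (hZmem : Z ∈ Algebra.adjoin ℂ
      (UniversalEnvelopingAlgebra.ι ℂ ''
        {z : LoopAlg k g | ∃ (n : Fin k → ℤ) (x : g),
          n ⟨k - 1, by omega⟩ < 0 ∧ z = tmon n ⊗ₜ[ℂ] x}))
    -- `Z` is non-constant, i.e. `Z ∉ ℂ·1`:
    (hZnc : Z ∉ Set.range (algebraMap ℂ (UniversalEnvelopingAlgebra ℂ (LoopAlg k g)))) :
    ∃ p₀ : ℤ, 0 < p₀ ∧ ∀ r : ℤ, p₀ ≤ r → ∃ x : g,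
      UniversalEnvelopingAlgebra.ι ℂ
          (tmon (Pi.single (⟨k - 2, by omega⟩ : Fin k) r) ⊗ₜ[ℂ] x) * Z -
        Z * UniversalEnvelopingAlgebra.ι ℂ
          (tmon (Pi.single (⟨k - 2, by omega⟩ : Fin k) r) ⊗ₜ[ℂ] x) ≠ 0 := by
  classical
  obtain ⟨q0, hq0⟩ := CNZ.exists_FF _ hZmem
  have hex : ∃ q, Z ∈ CNZ.FF q := ⟨q0, hq0⟩
  set p := Nat.find hex with hpdef
  have hZp : Z ∈ CNZ.FF p := Nat.find_spec hex
  have hp1 : 1 ≤ p := by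
    by_contra h
    have hp0 : p = 0 := by omega
    obtain ⟨c, hc⟩ := CNZ.FF_zero (hp0 ▸ hZp)
    exact hZnc ⟨c, hc.symm⟩
  have hminlt : Z ∉ CNZ.FF (p - 1) := Nat.find_min hex (by omega)
  obtain ⟨TS, hTS1, hTS2⟩ := CNZ.repr_canonical hZp
  set idx2 : Fin k := ⟨k - 2, by omega⟩ with hidx2
  set BB : ℕ := (TS.map fun t => ((t.2.map fun j => (j.1 idx2).natAbs).sum)).sum with hBB
  have hbound : ∀ t ∈ TS, ∀ j ∈ t.2, (j.1 idx2).natAbs ≤ BB := by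
    intro t ht j hj
    calc (j.1 idx2).natAbs ≤ (t.2.map fun j => (j.1 idx2).natAbs).sum :=
          CNZ.nat_le_sum_of_mem (List.mem_map_of_mem hj)
      _ ≤ BB := CNZ.nat_le_sum_of_mem (List.mem_map_of_mem ht)
  refine ⟨2 * BB + 1, by positivity, ?_⟩
  intro r hr
  by_contra hcon
  push_neg at hcon
  set er : Fin k → ℤ := Pi.single idx2 r with her
  set ax : g → LoopAlg k g := fun x => tmon er ⊗ₜ[ℂ] x with hax
  have hcomm : ∀ x : g, CNZ.ιU (ax x) * Z - Z * CNZ.ιU (ax x) = 0 := fun x => hcon x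
  have mbL_set : ∀ (il : List (CNZ.Ik k g)) (m : ℕ) (i' : CNZ.Ik k g),
      CNZ.mbL (il.set m i') = (CNZ.mbL il).set m (CNZ.bL i') := by
    intro il m i'
    simp [CNZ.mbL, List.map_set]
  have per_t : ∀ (x : g) (TL : List (CNZ.Ik k g)), TL.length = p →
      ∀ il : List (CNZ.Ik k g), il.length = p →
      CNZ.Psi TL (CNZ.ιU (ax x) * CNZ.mu (CNZ.mbL il) - CNZ.mu (CNZ.mbL il) * CNZ.ιU (ax x))
        = ∑ m ∈ Finset.range p, ∑ j' : Fin (Module.finrank ℂ g),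
            CNZ.gB.repr ⁅x, CNZ.gB (il.getD m CNZ.d0).2⁆ j' *
              CNZ.Psi TL (CNZ.mu (CNZ.mbL (il.set m ((er + (il.getD m CNZ.d0).1, j'))))) := by
    intro x TL hTL il hil
    rw [CNZ.comm_mu]
    rw [show (CNZ.mbL il).length = p from by rw [CNZ.mbL_length, hil]]
    rw [map_sum]
    refine Finset.sum_congr rfl fun m hm => ?_
    have hmp : m < p := Finset.mem_range.mp hm
    have hmil : m < il.length := by omega
    have hmil' : m < (CNZ.mbL il).length := by rw [CNZ.mbL_length]; omega
    rw [show (CNZ.mbL il).getD m 0 = (CNZ.bL (il.getD m CNZ.d0) : LoopAlg k g) from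
      CNZ.mbL_getD il m hmil]
    rw [show ⁅ax x, (CNZ.bL (il.getD m CNZ.d0) : LoopAlg k g)⁆
        = ∑ j' : Fin (Module.finrank ℂ g),
            CNZ.gB.repr ⁅x, CNZ.gB (il.getD m CNZ.d0).2⁆ j'
              • (CNZ.bL ((er + (il.getD m CNZ.d0).1, j') : CNZ.Ik k g) : LoopAlg k g) from
      CNZ.bracket_tmon_bL er x _]
    rw [CNZ.mu_set_sum _ _ _ _ _ hmil']
    rw [map_sum]
    refine Finset.sum_congr rfl fun j' _ => ?_
    rw [map_smul, smul_eq_mul]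
    rw [mbL_set]
  have master : ∀ (x : g) (TL : List (CNZ.Ik k g)), TL.length = p →
      (TS.map fun t =>
        if t.2.length = p then
          t.1 * ∑ m ∈ Finset.range p, ∑ j' : Fin (Module.finrank ℂ g),
            CNZ.gB.repr ⁅x, CNZ.gB (t.2.getD m CNZ.d0).2⁆ j' *
              CNZ.Psi TL (CNZ.mu (CNZ.mbL (t.2.set m ((er + (t.2.getD m CNZ.d0).1, j')))))
        else 0).sum = 0 := by
    intro x TL hTL
    have h0 : CNZ.Psi TL (CNZ.ιU (ax x) * Z - Z * CNZ.ιU (ax x)) = 0 := by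
      rw [hcomm x, map_zero]
    have hsplit : CNZ.ιU (ax x) * Z - Z * CNZ.ιU (ax x)
        = (CNZ.ιU (ax x) * (TS.map fun t => t.1 • CNZ.mu (CNZ.mbL t.2)).sum
            - (TS.map fun t => t.1 • CNZ.mu (CNZ.mbL t.2)).sum * CNZ.ιU (ax x))
          + (CNZ.ιU (ax x) * (Z - (TS.map fun t => t.1 • CNZ.mu (CNZ.mbL t.2)).sum)
            - (Z - (TS.map fun t => t.1 • CNZ.mu (CNZ.mbL t.2)).sum) * CNZ.ιU (ax x)) := by
      noncomm_ring
    rw [hsplit, map_add] at h0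
    rw [CNZ.Psi_FF TL (by omega) (CNZ.comm_FF _ hTS2), add_zero] at h0
    rw [CNZ.comm_list_sum, map_list_sum, List.map_map] at h0
    refine (congrArg List.sum (List.map_congr_left fun t ht => ?_)).trans h0
    simp only [Function.comp_apply, map_smul, smul_eq_mul]
    by_cases hl : t.2.length = p
    · rw [if_pos hl, per_t x TL hTL t.2 hl]
    · rw [if_neg hl]
      have hle : t.2.length ≤ p - 1 := by
        have := (hTS1 t ht).1
        omega
      rw [CNZ.Psi_FF TL (by omega)
        (CNZ.comm_FF _ (CNZ.mu_mem_FF (le_of_eq_of_le (CNZ.mbL_length t.2) hle))), mul_zero]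
  have key : ∀ t₀ ∈ TS, t₀.2.length = p →
      (TS.map fun t => if t.2 = t₀.2 then t.1 else 0).sum = 0 := by
    intro t₀ ht₀ hlen₀
    have h0p : 0 < p := hp1
    have h0l : 0 < t₀.2.length := by omega
    set l₀ := t₀.2 with hl₀def
    set nj₀ : CNZ.Ik k g := l₀.getD 0 CNZ.d0 with hnj₀
    set E₀ : Multiset (CNZ.Ik k g) :=
      ((l₀.eraseIdx 0 : List (CNZ.Ik k g)) : Multiset (CNZ.Ik k g)) with hE₀
    set TL : Fin (Module.finrank ℂ g) → List (CNZ.Ik k g) :=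
      fun j' => l₀.set 0 ((er + nj₀.1, j')) with hTLdef
    have hTLlen : ∀ j', (TL j').length = p := by
      intro j'
      simp only [hTLdef, List.length_set]
      exact hlen₀
    have hlowbd : ∀ t ∈ TS, ∀ v ∈ t.2, -(BB:ℤ) ≤ v.1 idx2 := by
      intro t ht v hv
      have h1 := hbound t ht v hv
      omega
    have hnotbig : ∀ t ∈ TS, ∀ v ∈ t.2, ¬ ((BB : ℤ) < v.1 idx2) := by
      intro t ht v hv
      have h1 := hbound t ht v hv
      omega
    have hbig : ∀ t ∈ TS, ∀ m, m < t.2.length →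
        (BB:ℤ) < ((er + (t.2.getD m CNZ.d0).1) idx2) := by
      intro t ht m hm
      have hmem := CNZ.getD_mem' t.2 m CNZ.d0 hm
      have hlb := hlowbd t ht _ hmem
      simp only [Pi.add_apply, her, Pi.single_eq_same]
      omega
    have equiv : ∀ t ∈ TS, t.2.length = p → ∀ m, m < p →
        ∀ j'' j' : Fin (Module.finrank ℂ g),
        ((t.2.set m ((er + (t.2.getD m CNZ.d0).1, j''))).Perm (TL j'))
          ↔ ((t.2.getD m CNZ.d0).1 = nj₀.1
              ∧ ((t.2.eraseIdx m : List (CNZ.Ik k g)) : Multiset (CNZ.Ik k g)) = E₀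
              ∧ j'' = j') := by
      intro t ht htl m hm j'' j'
      have hmt : m < t.2.length := by omega
      rw [← Multiset.coe_eq_coe]
      rw [CNZ.coe_set_eq _ _ hmt, hTLdef]
      rw [CNZ.coe_set_eq l₀ 0 h0l]
      constructor
      · intro hmul
        have hb1 : (fun v : CNZ.Ik k g => (BB : ℤ) < v.1 idx2)
            ((er + (t.2.getD m CNZ.d0).1, j'') : CNZ.Ik k g) := hbig t ht m hmt
        have hb2 : (fun v : CNZ.Ik k g => (BB : ℤ) < v.1 idx2)
            ((er + nj₀.1, j') : CNZ.Ik k g) := hbig t₀ ht₀ 0 h0l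
        have hf1 : Multiset.filter (fun v : CNZ.Ik k g => (BB : ℤ) < v.1 idx2)
            ((t.2.eraseIdx m : List (CNZ.Ik k g)) : Multiset (CNZ.Ik k g)) = 0 :=
          Multiset.filter_eq_nil.mpr (fun v hv =>
            hnotbig t ht v (List.eraseIdx_subset (Multiset.mem_coe.mp hv)))
        have hf2 : Multiset.filter (fun v : CNZ.Ik k g => (BB : ℤ) < v.1 idx2)
            ((l₀.eraseIdx 0 : List (CNZ.Ik k g)) : Multiset (CNZ.Ik k g)) = 0 :=
          Multiset.filter_eq_nil.mpr (fun v hv =>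
            hnotbig t₀ ht₀ v (List.eraseIdx_subset (Multiset.mem_coe.mp hv)))
        have hf := congrArg (Multiset.filter (fun v : CNZ.Ik k g => (BB : ℤ) < v.1 idx2)) hmul
        rw [Multiset.filter_cons_of_pos (p := fun v : CNZ.Ik k g => (BB : ℤ) < v.1 idx2)
              (a := ((er + (t.2.getD m CNZ.d0).1, j'') : CNZ.Ik k g)) _ hb1,
            Multiset.filter_cons_of_pos (p := fun v : CNZ.Ik k g => (BB : ℤ) < v.1 idx2)
              (a := ((er + nj₀.1, j') : CNZ.Ik k g)) _ hb2,
          hf1, hf2] at hf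
        have heq : ((er + (t.2.getD m CNZ.d0).1, j'') : CNZ.Ik k g)
            = ((er + nj₀.1, j') : CNZ.Ik k g) := by
          have := hf
          rw [Multiset.cons_zero, Multiset.cons_zero] at this
          exact Multiset.singleton_inj.mp this
        have he1 : er + (t.2.getD m CNZ.d0).1 = er + nj₀.1 := congrArg Prod.fst heq
        have he2 : j'' = j' := congrArg Prod.snd heq
        refine ⟨add_left_cancel he1, ?_, he2⟩
        rw [heq] at hmul
        exact (Multiset.cons_inj_right _).mp hmul
      · rintro ⟨h1, h2, rfl⟩
        rw [h1, h2]
    set cond : (ℂ × List (CNZ.Ik k g)) → ℕ → Prop := fun t m =>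
      t.2.length = p ∧ (t.2.getD m CNZ.d0).1 = nj₀.1 ∧
        ((t.2.eraseIdx m : List (CNZ.Ik k g)) : Multiset (CNZ.Ik k g)) = E₀ with hconddef
    set G : g := (TS.map fun t => ∑ m ∈ Finset.range p,
        if cond t m then t.1 • CNZ.gB (t.2.getD m CNZ.d0).2 else 0).sum with hGdef
    have hrepr : ∀ (x : g) (j' : Fin (Module.finrank ℂ g)), CNZ.gB.repr ⁅x, G⁆ j'
        = (TS.map fun t => ∑ m ∈ Finset.range p,
            if cond t m then t.1 * CNZ.gB.repr ⁅x, CNZ.gB (t.2.getD m CNZ.d0).2⁆ j'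
            else 0).sum := by
      intro x j'
      have h1 : CNZ.gB.repr ⁅x, G⁆ j'
          = ((CNZ.gB.coord j').comp (LieAlgebra.ad ℂ g x)) G := by
        simp [LinearMap.comp_apply, LieAlgebra.ad_apply, Module.Basis.coord_apply]
      rw [h1, hGdef, map_list_sum, List.map_map]
      refine congrArg List.sum (List.map_congr_left fun t _ => ?_)
      simp only [Function.comp_apply, map_sum]
      refine Finset.sum_congr rfl fun m _ => ?_
      by_cases hc : cond t m
      · rw [if_pos hc, if_pos hc, map_smul, smul_eq_mul]
        simp [LinearMap.comp_apply, LieAlgebra.ad_apply, Module.Basis.coord_apply]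
      · rw [if_neg hc, if_neg hc, map_zero]
    have stepA : ∀ x : g, ⁅x, G⁆ = 0 := by
      intro x
      refine (CNZ.gB.forall_coord_eq_zero_iff).mp fun j' => ?_
      rw [Module.Basis.coord_apply]
      have hM := master x (TL j') (hTLlen j')
      have heval : ∀ t ∈ TS, t.2.length = p → ∀ m, m < p →
          ∀ j'' : Fin (Module.finrank ℂ g),
          CNZ.Psi (TL j') (CNZ.mu (CNZ.mbL (t.2.set m ((er + (t.2.getD m CNZ.d0).1, j'')))))
            = if ((t.2.getD m CNZ.d0).1 = nj₀.1
                ∧ ((t.2.eraseIdx m : List (CNZ.Ik k g)) : Multiset (CNZ.Ik k g)) = E₀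
                ∧ j'' = j')
              then ((CNZ.Nm (TL j') (TL j') : ℕ) : ℂ) else 0 := by
        intro t ht htl m hm j''
        have hsetlen : (t.2.set m ((er + (t.2.getD m CNZ.d0).1, j''))).length
            = (TL j').length := by
          rw [List.length_set, htl, hTLlen j']
        by_cases hperm : (t.2.set m ((er + (t.2.getD m CNZ.d0).1, j''))).Perm (TL j')
        · rw [if_pos ((equiv t ht htl m hm j'' j').mp hperm)]
          have hPP := CNZ.Psi_perm (TL j')
            (l := CNZ.mbL (t.2.set m ((er + (t.2.getD m CNZ.d0).1, j''))))
            (l' := CNZ.mbL (TL j'))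
            (hperm.map _) (by rw [CNZ.mbL_length]; exact hsetlen)
          rw [hPP]
          exact CNZ.Psi_mu_basis (TL j') (TL j') rfl
        · rw [if_neg (fun hc => hperm ((equiv t ht htl m hm j'' j').mpr hc))]
          rw [CNZ.Psi_mu_basis (TL j') _ hsetlen.symm]
          rw [CNZ.Nm_eq_zero (fun hp2 => hperm hp2.symm), Nat.cast_zero]
      have hM2 : (TS.map fun t => ∑ m ∈ Finset.range p,
          if cond t m then
            t.1 * (CNZ.gB.repr ⁅x, CNZ.gB (t.2.getD m CNZ.d0).2⁆ j'
              * ((CNZ.Nm (TL j') (TL j') : ℕ) : ℂ))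
          else 0).sum = 0 := by
        refine Eq.trans (congrArg List.sum (List.map_congr_left fun t ht => ?_)) hM
        by_cases hl : t.2.length = p
        · rw [if_pos hl]
          rw [Finset.mul_sum]
          refine Finset.sum_congr rfl fun m hm => ?_
          have hmp : m < p := Finset.mem_range.mp hm
          rw [Finset.sum_congr rfl (fun j'' _ => by rw [heval t ht hl m hmp j''])]
          rcases Classical.em ((t.2.getD m CNZ.d0).1 = nj₀.1
              ∧ ((t.2.eraseIdx m : List (CNZ.Ik k g)) : Multiset (CNZ.Ik k g)) = E₀)
            with hA | hA
          · have hcondtm : cond t m := ⟨hl, hA.1, hA.2⟩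
            rw [if_pos hcondtm]
            have hinner : ∀ j'' : Fin (Module.finrank ℂ g),
                CNZ.gB.repr ⁅x, CNZ.gB (t.2.getD m CNZ.d0).2⁆ j''
                  * (if ((t.2.getD m CNZ.d0).1 = nj₀.1
                      ∧ ((t.2.eraseIdx m : List (CNZ.Ik k g)) : Multiset (CNZ.Ik k g)) = E₀
                      ∧ j'' = j')
                    then ((CNZ.Nm (TL j') (TL j') : ℕ) : ℂ) else 0)
                = if j'' = j' then
                    CNZ.gB.repr ⁅x, CNZ.gB (t.2.getD m CNZ.d0).2⁆ j''
                      * ((CNZ.Nm (TL j') (TL j') : ℕ) : ℂ)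
                  else 0 := by
              intro j''
              by_cases hj : j'' = j'
              · rw [if_pos hj, if_pos ⟨hA.1, hA.2, hj⟩]
              · rw [if_neg hj, if_neg (fun hc => hj hc.2.2), mul_zero]
            rw [Finset.sum_congr rfl (fun j'' _ => hinner j'')]
            rw [Finset.sum_ite_eq' Finset.univ j'
              (fun j'' => CNZ.gB.repr ⁅x, CNZ.gB (t.2.getD m CNZ.d0).2⁆ j''
                * ((CNZ.Nm (TL j') (TL j') : ℕ) : ℂ)),
              if_pos (Finset.mem_univ j')]
          · rw [if_neg (fun hc => hA ⟨hc.2.1, hc.2.2⟩)]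
            rw [Finset.sum_eq_zero (fun j'' _ => by
              rw [if_neg (fun hc => hA ⟨hc.1, hc.2.1⟩), mul_zero]), mul_zero]
        · rw [if_neg hl]
          rw [Finset.sum_eq_zero (fun m _ => by
            rw [if_neg (fun hc => hl hc.1)])]
      have h3 : (CNZ.gB.repr ⁅x, G⁆ j') * ((CNZ.Nm (TL j') (TL j') : ℕ) : ℂ) = 0 := by
        rw [hrepr x j']
        rw [mul_comm, CNZ.list_sum_mul_left, List.map_map]
        rw [show (TS.map ((fun y => ((CNZ.Nm (TL j') (TL j') : ℕ) : ℂ) * y) ∘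
            fun t => ∑ m ∈ Finset.range p,
              if cond t m then t.1 * CNZ.gB.repr ⁅x, CNZ.gB (t.2.getD m CNZ.d0).2⁆ j'
              else 0))
          = TS.map fun t => ∑ m ∈ Finset.range p,
              if cond t m then
                t.1 * (CNZ.gB.repr ⁅x, CNZ.gB (t.2.getD m CNZ.d0).2⁆ j'
                  * ((CNZ.Nm (TL j') (TL j') : ℕ) : ℂ))
              else 0 from List.map_congr_left fun t _ => by
            simp only [Function.comp_apply]
            rw [Finset.mul_sum]
            refine Finset.sum_congr rfl fun m _ => ?_
            by_cases hc : cond t m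
            · rw [if_pos hc, if_pos hc]; ring
            · rw [if_neg hc, if_neg hc, mul_zero]]
        exact hM2
      rcases mul_eq_zero.mp h3 with h | h
      · exact h
      · exact absurd h (CNZ.nu_ne_zero (TL j'))
    have hG0 : G = 0 := CNZ.g_center stepA
    have hiff : ∀ t ∈ TS, ∀ m, m < p →
        ((cond t m ∧ (t.2.getD m CNZ.d0).2 = nj₀.2) ↔
          (t.2 = l₀ ∧ t.2.getD m CNZ.d0 = nj₀)) := by
      intro t ht m hm
      constructor
      · rintro ⟨⟨hlen, hfst, herase⟩, hsnd⟩
        have hgd : t.2.getD m CNZ.d0 = nj₀ := Prod.ext hfst hsnd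
        refine ⟨?_, hgd⟩
        have hmt : m < t.2.length := by omega
        have h1 := CNZ.coe_getD_cons_eraseIdx t.2 m hmt
        have h2 := CNZ.coe_getD_cons_eraseIdx l₀ 0 h0l
        have h3 : (t.2 : Multiset (CNZ.Ik k g)) = (l₀ : Multiset (CNZ.Ik k g)) := by
          rw [h1, h2, hgd, herase]
        have hper : t.2.Perm l₀ := Multiset.coe_eq_coe.mp h3
        have hc1 := (hTS1 t ht).2
        have hc2 := (hTS1 t₀ ht₀).2
        calc t.2 = CNZ.canon t.2 := hc1.symm
          _ = CNZ.canon l₀ := CNZ.canon_eq_of_perm hper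
          _ = l₀ := hc2
      · rintro ⟨hteq, hgd⟩
        have hmt : m < t.2.length := by rw [hteq]; omega
        refine ⟨⟨by rw [hteq]; exact hlen₀, by rw [hgd], ?_⟩, by rw [hgd]⟩
        have h1 := CNZ.coe_getD_cons_eraseIdx t.2 m hmt
        have h2 := CNZ.coe_getD_cons_eraseIdx l₀ 0 h0l
        rw [hgd] at h1
        rw [hteq] at h1
        have h4 := (Multiset.cons_inj_right nj₀).mp (h1.symm.trans h2)
        rw [hteq, h4]
    have hGco : (TS.map fun t => ∑ m ∈ Finset.range p,
        if cond t m ∧ (t.2.getD m CNZ.d0).2 = nj₀.2 then t.1 else 0).sum = 0 := by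
      have h1 : CNZ.gB.repr G nj₀.2 = 0 := by rw [hG0, map_zero]; rfl
      have h2 : CNZ.gB.repr G nj₀.2
          = (TS.map fun t => ∑ m ∈ Finset.range p,
              if cond t m ∧ (t.2.getD m CNZ.d0).2 = nj₀.2 then t.1 else 0).sum := by
        have h3 : CNZ.gB.repr G nj₀.2 = (CNZ.gB.coord nj₀.2) G := by
          rw [Module.Basis.coord_apply]
        rw [h3, hGdef, map_list_sum, List.map_map]
        refine congrArg List.sum (List.map_congr_left fun t _ => ?_)
        simp only [Function.comp_apply, map_sum]
        refine Finset.sum_congr rfl fun m _ => ?_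
        by_cases hc : cond t m
        · rw [if_pos hc, map_smul, smul_eq_mul, Module.Basis.coord_apply, Module.Basis.repr_self,
            Finsupp.single_apply]
          by_cases hj : (t.2.getD m CNZ.d0).2 = nj₀.2
          · rw [if_pos hj, if_pos ⟨hc, hj⟩, mul_one]
          · rw [if_neg hj, if_neg (fun hcc => hj hcc.2), mul_zero]
        · rw [if_neg hc, map_zero, if_neg (fun hcc => hc hcc.1)]
      rw [← h2, h1]
    have hcnt1 : 1 ≤ ∑ m ∈ Finset.range p, if l₀.getD m CNZ.d0 = nj₀ then 1 else 0 := by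
      have h00 : (if l₀.getD 0 CNZ.d0 = nj₀ then (1:ℕ) else 0) = 1 := if_pos hnj₀.symm
      calc (1:ℕ) = _ := h00.symm
        _ ≤ _ := Finset.single_le_sum
            (f := fun m => if l₀.getD m CNZ.d0 = nj₀ then (1:ℕ) else 0)
            (fun _ _ => Nat.zero_le _) (Finset.mem_range.mpr h0p)
    have hfin : (TS.map fun t => if t.2 = l₀ then t.1 else 0).sum
        * ((∑ m ∈ Finset.range p, if l₀.getD m CNZ.d0 = nj₀ then 1 else 0 : ℕ) : ℂ) = 0 := by
      rw [mul_comm, CNZ.list_sum_mul_left, List.map_map]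
      rw [show (TS.map ((fun y => ((∑ m ∈ Finset.range p,
            if l₀.getD m CNZ.d0 = nj₀ then 1 else 0 : ℕ) : ℂ) * y) ∘
          fun t => if t.2 = l₀ then t.1 else 0))
        = TS.map fun t => ∑ m ∈ Finset.range p,
            if cond t m ∧ (t.2.getD m CNZ.d0).2 = nj₀.2 then t.1 else 0 from
        List.map_congr_left fun t ht => by
          simp only [Function.comp_apply]
          by_cases ht2 : t.2 = l₀
          · rw [if_pos ht2]
            rw [Nat.cast_sum, Finset.sum_mul]
            refine Finset.sum_congr rfl fun m hm => ?_
            have hmp : m < p := Finset.mem_range.mp hm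
            rw [show ((if l₀.getD m CNZ.d0 = nj₀ then (1:ℕ) else 0 : ℕ) : ℂ)
              = if l₀.getD m CNZ.d0 = nj₀ then (1:ℂ) else 0 from by
                by_cases hmm : l₀.getD m CNZ.d0 = nj₀
                · rw [if_pos hmm, if_pos hmm, Nat.cast_one]
                · rw [if_neg hmm, if_neg hmm, Nat.cast_zero]]
            by_cases hmm : l₀.getD m CNZ.d0 = nj₀
            · rw [if_pos hmm, one_mul,
                if_pos (((hiff t ht m hmp).mpr ⟨ht2, by rw [ht2]; exact hmm⟩))]
            · rw [if_neg hmm, zero_mul,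
                if_neg (fun hcc => hmm (by rw [← ht2]; exact ((hiff t ht m hmp).mp hcc).2))]
          · rw [if_neg ht2, mul_zero]
            rw [Finset.sum_eq_zero (fun m hm => ?_)]
            have hmp : m < p := Finset.mem_range.mp hm
            exact if_neg (fun hcc => ht2 ((hiff t ht m hmp).mp hcc).1)]
      exact hGco
    rcases mul_eq_zero.mp hfin with h | h
    · exact h
    · exact absurd h (Nat.cast_ne_zero.mpr (by omega))
  set D : List (CNZ.Ik k g) →₀ ℂ := (TS.map fun t =>
      if t.2.length = p then Finsupp.single t.2 t.1 else 0).sum with hD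
  have hDl : ∀ l₀, D l₀ = 0 := by
    intro l₀
    have happ : D l₀ = (TS.map fun t =>
        if t.2.length = p then (if t.2 = l₀ then t.1 else 0) else 0).sum := by
      rw [hD]
      rw [show ((TS.map fun t =>
            if t.2.length = p then Finsupp.single t.2 t.1 else 0).sum) l₀
          = (Finsupp.applyAddHom (M := ℂ) l₀)
              ((TS.map fun t => if t.2.length = p then Finsupp.single t.2 t.1 else 0).sum)
        from rfl]
      rw [map_list_sum, List.map_map]
      refine congrArg List.sum (List.map_congr_left fun t _ => ?_)
      simp only [Function.comp_apply]
      by_cases hl : t.2.length = p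
      · rw [if_pos hl, if_pos hl]
        exact Finsupp.single_apply
      · rw [if_neg hl, if_neg hl]; rfl
    rw [happ]
    by_cases hex2 : ∃ t ∈ TS, t.2.length = p ∧ t.2 = l₀
    · obtain ⟨t₀, ht₀, hlen₀, hteq⟩ := hex2
      have hk2 := key t₀ ht₀ hlen₀
      rw [show (TS.map fun t => if t.2.length = p then (if t.2 = l₀ then t.1 else 0) else 0)
          = TS.map fun t => if t.2 = t₀.2 then t.1 else 0 from
        List.map_congr_left fun t _ => by
          by_cases h2 : t.2 = t₀.2
          · rw [if_pos (by rw [h2]; exact hlen₀), if_pos (by rw [h2, hteq]), if_pos h2]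
          · by_cases hl : t.2.length = p
            · rw [if_pos hl, if_neg (fun hh => h2 (hh.trans hteq.symm)), if_neg h2]
            · rw [if_neg hl, if_neg h2]]
      exact hk2
    · refine List.sum_eq_zero fun z hz => ?_
      obtain ⟨t, ht, rfl⟩ := List.mem_map.mp hz
      by_cases hl : t.2.length = p
      · rw [if_pos hl, if_neg (fun h2 => hex2 ⟨t, ht, hl, h2⟩)]
      · rw [if_neg hl]
  have hD0 : D = 0 := Finsupp.ext hDl
  have hSp : (TS.map fun t => if t.2.length = p then t.1 • CNZ.mu (CNZ.mbL t.2) else 0).sum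
      = 0 := by
    have hφ := congrArg
      (Finsupp.linearCombination ℂ (fun il => CNZ.mu (CNZ.mbL il))) hD0
    rw [map_zero] at hφ
    rw [hD, map_list_sum, List.map_map] at hφ
    refine Eq.trans (congrArg List.sum (List.map_congr_left fun t _ => ?_)) hφ
    simp only [Function.comp_apply]
    by_cases hl : t.2.length = p
    · rw [if_pos hl, if_pos hl, Finsupp.linearCombination_single]
    · rw [if_neg hl, if_neg hl, map_zero]
  have hsplitTS : (TS.map fun t => t.1 • CNZ.mu (CNZ.mbL t.2)).sum
      = (TS.map fun t => if t.2.length = p then t.1 • CNZ.mu (CNZ.mbL t.2) else 0).sum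
        + (TS.map fun t => if t.2.length = p then 0 else t.1 • CNZ.mu (CNZ.mbL t.2)).sum := by
    rw [← CNZ.list_sum_add']
    refine congrArg List.sum (List.map_congr_left fun t _ => ?_)
    by_cases h : t.2.length = p
    · rw [if_pos h, if_pos h, add_zero]
    · rw [if_neg h, if_neg h, zero_add]
  have hlow : (TS.map fun t => if t.2.length = p then 0
      else t.1 • CNZ.mu (CNZ.mbL t.2)).sum ∈ CNZ.FF (p - 1) := by
    refine list_sum_mem fun w hw => ?_
    obtain ⟨t, ht, rfl⟩ := List.mem_map.mp hw
    by_cases h : t.2.length = p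
    · rw [if_pos h]; exact Submodule.zero_mem _
    · rw [if_neg h]
      refine Submodule.smul_mem _ _ (CNZ.mu_mem_FF ?_)
      rw [CNZ.mbL_length]
      have := (hTS1 t ht).1
      omega
  have hZlow : Z ∈ CNZ.FF (p - 1) := by
    have hz : Z = (Z - (TS.map fun t => t.1 • CNZ.mu (CNZ.mbL t.2)).sum)
        + ((TS.map fun t => if t.2.length = p then t.1 • CNZ.mu (CNZ.mbL t.2) else 0).sum
          + (TS.map fun t => if t.2.length = p then 0
              else t.1 • CNZ.mu (CNZ.mbL t.2)).sum) := by
      rw [← hsplitTS]; abel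
    rw [hz, hSp, zero_add]
    exact Submodule.add_mem _ hTS2 hlow
  exact hminlt hZlow
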